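/- Let N ∈ ℕ, set ℓ := N/2, and let ν > 0. Let S be the (N+1)×(N+1) matrix (indices 0,…,N) with S_{i,i−1} = i/2 for 1 ≤ i ≤ N, S_{i,i+1} = (N−i)/2 for 0 ≤ i ≤ N−1, and all other entries zero. For y ∈ (0,1) let F(y) be the tridiagonal matrix with F(y)_{i,i} = ℓ(ℓ+2) − i² + 2ℓi − (ℓ(2i+1) − i²)/(2y(1−y)), F(y)_{i,i−1} = i(2ℓ−i+1)(1−2y)/(4y(1−y)), F(y)_{i,i+1} = (i+1)(2ℓ−i)(1−2y)/(4y(1−y)), and set F^{(ν)}(y) := F(y) − (ν−1)(2ℓ+ν+1)I + ((ν−1)(1−2y)/(2y(1−y)))(Sᵀ − ℓI + 2ℓyI). Let T^{(ν)} be the diagonal matrix with T^{(ν)}_{i,i} = C(N,i)(ν)_i/(ν+N−i)_i for i = 0,…,N. Then T^{(ν)} (F^{(ν)}(y))ᵀ = F^{(ν)}(y) T^{(ν)} for all y ∈ (0,1). -/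

import Mathlib

open Matrix Set Polynomial

lemma asc_succ_left_eval (n : ℕ) (x : ℝ) :
    (ascPochhammer ℝ (n + 1)).eval x = x * (ascPochhammer ℝ n).eval (x + 1) := by
  rw [ascPochhammer_succ_left]
  simp [eval_comp]

lemma key (N i : ℕ) (hi : i < N) (ν : ℝ) (hν : 0 < ν) :
    ((N.choose i : ℝ) * (ascPochhammer ℝ i).eval ν
        / (ascPochhammer ℝ i).eval (ν + N - i)) * (((N:ℝ) - i) * (ν + i))
      = ((i:ℝ) + 1) * (ν + (N:ℝ) - (i+1)) *
        ((N.choose (i+1) : ℝ) * (ascPochhammer ℝ (i+1)).eval ν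
          / (ascPochhammer ℝ (i+1)).eval (ν + N - (i+1))) := by
  have h1 : (ascPochhammer ℝ (i+1)).eval ν = (ascPochhammer ℝ i).eval ν * (ν + i) :=
    ascPochhammer_succ_eval i ν
  have h2 : (ascPochhammer ℝ (i+1)).eval (ν + N - (i+1))
      = (ν + N - (i+1)) * (ascPochhammer ℝ i).eval (ν + N - i) := by
    rw [asc_succ_left_eval]
    ring_nf
  have hx : (0:ℝ) < ν + N - (i+1) := by
    have : (i:ℝ) + 1 ≤ N := by exact_mod_cast hi
    linarith
  have hx' : (0:ℝ) < ν + N - i := by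
    have : (i:ℝ) ≤ N := by exact_mod_cast hi.le
    linarith
  have hp : (0:ℝ) < (ascPochhammer ℝ i).eval (ν + N - i) := ascPochhammer_pos i _ hx'
  have hc : (N.choose (i+1) : ℝ) * (i+1) = (N.choose i : ℝ) * ((N:ℝ) - i) := by
    have h3 := congrArg (Nat.cast : ℕ → ℝ) (Nat.choose_succ_right_eq N i)
    push_cast [Nat.cast_sub hi.le] at h3
    linarith
  have gen : ∀ A B c x Pd m : ℝ, x ≠ 0 → Pd ≠ 0 → A * m * x = c * B →
      A / Pd * m = c * (B / (x * Pd)) := by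
    intro A B c x Pd m hx0 hPd0 h
    field_simp
    linear_combination h
  rw [h1, h2]
  exact gen _ _ _ _ _ _ hx.ne' hp.ne'
    (by linear_combination -((ν + (N:ℝ) - ((i:ℝ)+1)) * (ascPochhammer ℝ i).eval ν * (ν + (i:ℝ))) * hc)

lemma keyDF (N i : ℕ) (hi : i < N) (ν : ℝ) (hν : 0 < ν) :
    (N.choose i : ℝ) * (ascPochhammer ℝ i).eval ν * (((N:ℝ) - i) * (ν + i))
        * (ascPochhammer ℝ (i+1)).eval (ν + N - (i+1))
      = ((i:ℝ) + 1) * (ν + (N:ℝ) - (i+1)) * ((N.choose (i+1) : ℝ)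
          * (ascPochhammer ℝ (i+1)).eval ν) * (ascPochhammer ℝ i).eval (ν + N - i) := by
  have h1 : (ascPochhammer ℝ (i+1)).eval ν = (ascPochhammer ℝ i).eval ν * (ν + i) :=
    ascPochhammer_succ_eval i ν
  have h2 : (ascPochhammer ℝ (i+1)).eval (ν + N - (i+1))
      = (ν + N - (i+1)) * (ascPochhammer ℝ i).eval (ν + N - i) := by
    rw [asc_succ_left_eval]; ring_nf
  have hc : (N.choose (i+1) : ℝ) * (i+1) = (N.choose i : ℝ) * ((N:ℝ) - i) := by
    have h3 := congrArg (Nat.cast : ℕ → ℝ) (Nat.choose_succ_right_eq N i)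
    push_cast [Nat.cast_sub hi.le] at h3
    linarith
  rw [h1, h2]
  linear_combination -((ascPochhammer ℝ i).eval ν * (ν + (i:ℝ)) * (ν + (N:ℝ) - ((i:ℝ)+1))
    * (ascPochhammer ℝ i).eval (ν + (N:ℝ) - (i:ℝ))) * hc

/-- the diagonal matrix `T^{(ν)}` with entries
`C(N,i)(ν)_i/(ν+N−i)_i` satisfies `T^{(ν)} (F^{(ν)}(y))ᵀ = F^{(ν)}(y) T^{(ν)}`
for the deformed matrix `F^{(ν)}` of the `(SU(2)×SU(2), diag SU(2))` example. -/
theorem stmt11 (N : ℕ) (ν : ℝ) (hν : 0 < ν)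
    (ℓ : ℝ) (hℓ : ℓ = (N : ℝ) / 2)
    (S : Matrix (Fin (N + 1)) (Fin (N + 1)) ℝ)
    (hS : S = Matrix.of fun (i j : Fin (N + 1)) =>
      if (j : ℕ) + 1 = (i : ℕ) then (i : ℝ) / 2
      else if (i : ℕ) + 1 = (j : ℕ) then ((N : ℝ) - (i : ℕ)) / 2
      else 0)
    (F : ℝ → Matrix (Fin (N + 1)) (Fin (N + 1)) ℝ)
    (hF : ∀ y : ℝ, F y = Matrix.of fun (i j : Fin (N + 1)) =>
      if i = j then
        ℓ * (ℓ + 2) - ((i : ℕ) : ℝ) ^ 2 + 2 * ℓ * ((i : ℕ) : ℝ)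
          - (ℓ * (2 * ((i : ℕ) : ℝ) + 1) - ((i : ℕ) : ℝ) ^ 2) / (2 * y * (1 - y))
      else if (j : ℕ) + 1 = (i : ℕ) then
        ((i : ℕ) : ℝ) * (2 * ℓ - ((i : ℕ) : ℝ) + 1) * (1 - 2 * y) / (4 * y * (1 - y))
      else if (i : ℕ) + 1 = (j : ℕ) then
        (((i : ℕ) : ℝ) + 1) * (2 * ℓ - ((i : ℕ) : ℝ)) * (1 - 2 * y) / (4 * y * (1 - y))
      else 0)
    (Fν : ℝ → Matrix (Fin (N + 1)) (Fin (N + 1)) ℝ)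
    (hFν : ∀ y : ℝ, Fν y = F y
      - ((ν - 1) * (2 * ℓ + ν + 1)) • (1 : Matrix (Fin (N + 1)) (Fin (N + 1)) ℝ)
      + ((ν - 1) * (1 - 2 * y) / (2 * y * (1 - y))) •
          (Sᵀ - ℓ • (1 : Matrix (Fin (N + 1)) (Fin (N + 1)) ℝ)
            + (2 * ℓ * y) • (1 : Matrix (Fin (N + 1)) (Fin (N + 1)) ℝ)))
    (T : Matrix (Fin (N + 1)) (Fin (N + 1)) ℝ)
    (hT : T = Matrix.diagonal fun (i : Fin (N + 1)) =>
      (N.choose (i : ℕ) : ℝ) * (ascPochhammer ℝ (i : ℕ)).eval ν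
        / (ascPochhammer ℝ (i : ℕ)).eval (ν + (N : ℝ) - ((i : ℕ) : ℝ))) :
    ∀ y ∈ Set.Ioo (0:ℝ) 1, T * (Fν y)ᵀ = Fν y * T := by
  intro y hy
  obtain ⟨hy0, hy1⟩ := hy
  have hy1' : (1:ℝ) - y ≠ 0 := by linarith
  ext i j
  rw [hT]
  rw [Matrix.diagonal_mul, Matrix.mul_diagonal, Matrix.transpose_apply, hFν, hF, hS]
  by_cases hij : i = j
  · subst hij; ring
  · have hji : ¬ j = i := fun h => hij h.symm
    have hij' : ¬ (i:ℕ) = (j:ℕ) := fun h => hij (Fin.ext h)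
    simp only [Matrix.add_apply, Matrix.sub_apply, Matrix.smul_apply, Matrix.one_apply,
      Matrix.of_apply, Matrix.transpose_apply, smul_eq_mul, if_neg hij, if_neg hji]
    by_cases h2 : (i:ℕ)+1 = (j:ℕ)
    · have h1 : ¬ ((j:ℕ)+1 = (i:ℕ)) := by omega
      simp only [if_pos h2, if_neg h1, mul_zero, add_zero, zero_add, mul_ite, mul_one, sub_zero]
      have hiN : (i:ℕ) < N := by have := j.isLt; omega
      have hj : (j:ℕ) = (i:ℕ)+1 := h2.symm
      rw [hj]
      subst hℓ
      have hkey := keyDF N i hiN ν hν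
      have hx' : (0:ℝ) < ν + ↑N - ↑↑i := by
        have : ((i:ℕ):ℝ) ≤ N := by exact_mod_cast hiN.le
        linarith
      have hx : (0:ℝ) < ν + ↑N - (↑↑i + 1) := by
        have : ((i:ℕ):ℝ) + 1 ≤ N := by exact_mod_cast hiN
        linarith
      have hp1 : Polynomial.eval (ν + ↑N - ↑↑i) (ascPochhammer ℝ (i:ℕ)) ≠ 0 :=
        (ascPochhammer_pos _ _ hx').ne'
      have hp2 : Polynomial.eval (ν + ↑N - (↑↑i + 1)) (ascPochhammer ℝ ((i:ℕ)+1)) ≠ 0 :=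
        (ascPochhammer_pos _ _ hx).ne'
      push_cast at hkey ⊢
      field_simp
      linear_combination (4*(1-2*y)) * hkey
    · by_cases h1 : (j:ℕ)+1 = (i:ℕ)
      · simp only [if_pos h1, if_neg h2, mul_zero, add_zero, zero_add, mul_ite, mul_one, sub_zero]
        have hjN : (j:ℕ) < N := by have := i.isLt; omega
        have hi : (i:ℕ) = (j:ℕ)+1 := h1.symm
        rw [hi]
        subst hℓ
        have hkey := keyDF N j hjN ν hν
        have hx' : (0:ℝ) < ν + ↑N - ↑↑j := by
          have : ((j:ℕ):ℝ) ≤ N := by exact_mod_cast hjN.le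
          linarith
        have hx : (0:ℝ) < ν + ↑N - (↑↑j + 1) := by
          have : ((j:ℕ):ℝ) + 1 ≤ N := by exact_mod_cast hjN
          linarith
        have hp1 : Polynomial.eval (ν + ↑N - ↑↑j) (ascPochhammer ℝ (j:ℕ)) ≠ 0 :=
          (ascPochhammer_pos _ _ hx').ne'
        have hp2 : Polynomial.eval (ν + ↑N - (↑↑j + 1)) (ascPochhammer ℝ ((j:ℕ)+1)) ≠ 0 :=
          (ascPochhammer_pos _ _ hx).ne'
        push_cast at hkey ⊢
        field_simp
        linear_combination (-(4*(1-2*y))) * hkey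
      · simp only [if_neg h1, if_neg h2, mul_zero, add_zero, zero_add, sub_zero]
        ring
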